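/- Let B, C be real numbers with |B| ≤ C and C − B > 0, and set F(y) = By + C. There exists a constant c > 0 depending only on B, C such that for every C² function σ : [-1,1] → ℂ with σ(-1) = σ(1) = 0, one has |σ'(-1)|² ≤ c·∫₋₁¹F(y)|σ''(y)|²dy. -/

import Mathlib

open MeasureTheory intervalIntegral

/-- Boundary estimate (cf. \eqref{910b} in the paper): for the affine weight
`F(y) = By + C` with `|B| ≤ C` and `C − B > 0`, there is `c > 0` depending only on `B, C`
such that every `C²` function `σ` with `σ(±1) = 0` satisfies
`|σ'(-1)|² ≤ c·∫F|σ''|²`. -/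
theorem stmt_5 (B C : ℝ) (hBC : |B| ≤ C) (hCB : 0 < C - B) :
    ∃ c > 0, ∀ σ : ℝ → ℂ, ContDiff ℝ 2 σ → σ (-1) = 0 → σ 1 = 0 →
      ‖deriv σ (-1)‖ ^ 2
        ≤ c * ∫ y in (-1 : ℝ)..1, (B * y + C) * ‖iteratedDeriv 2 σ y‖ ^ 2 := by
  have hBp : 0 ≤ B + C := by have := (abs_le.mp hBC).1; linarith
  refine ⟨1/(C - B), by positivity, ?_⟩
  intro σ hσ hm hp
  have h2 : ContDiff ℝ (1+1 : ℕ) σ := by norm_num; exact hσ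
  have h1 : ContDiff ℝ 1 (deriv σ) := (contDiff_succ_iff_deriv.mp h2).2.2
  have hσd : Differentiable ℝ σ := hσ.differentiable (by norm_num)
  set f := deriv σ with hfdef
  set g := deriv f with hgdef
  have hgc : Continuous g := h1.continuous_deriv le_rfl
  have hfc : Continuous f := h1.continuous
  have hfd : ∀ x, HasDerivAt f (g x) x := fun x => (h1.differentiable (by norm_num) x).hasDerivAt
  have hiter : iteratedDeriv 2 σ = g := by
    simp [iteratedDeriv_succ, iteratedDeriv_one, hfdef, hgdef]
  simp only [hiter]
  set I := ∫ y in (-1:ℝ)..1, (B * y + C) * ‖g y‖ ^ 2 with hIdef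
  -- nonnegativity of the weight
  have hFnn : ∀ t ∈ Set.Icc (-1:ℝ) 1, 0 ≤ B * t + C := by
    intro t ht
    obtain ⟨ht1, ht2⟩ := ht
    nlinarith [mul_nonneg hBp (by linarith : (0:ℝ) ≤ 1 + t),
      mul_nonneg hCB.le (by linarith : (0:ℝ) ≤ 1 - t)]
  have hInn : 0 ≤ I := by
    apply intervalIntegral.integral_nonneg (by norm_num)
    intro t ht
    exact mul_nonneg (hFnn t ht) (sq_nonneg _)
  -- integration by parts
  have hu : ∀ x ∈ Set.uIcc (-1:ℝ) 1, HasDerivAt (fun t : ℝ => 1 - (t:ℂ)) (-1) x := by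
    intro x _
    simpa using (Complex.ofRealCLM.hasDerivAt (x := x)).const_sub 1
  have hv : ∀ x ∈ Set.uIcc (-1:ℝ) 1, HasDerivAt f (g x) x := fun x _ => hfd x
  have hibp := intervalIntegral.integral_mul_deriv_eq_deriv_mul hu hv
      (intervalIntegrable_const) (hgc.intervalIntegrable _ _)
  have hfint : (∫ t in (-1:ℝ)..1, f t) = 0 := by
    rw [intervalIntegral.integral_deriv_eq_sub (fun x _ => hσd x) (hfc.intervalIntegrable _ _),
      hp, hm, sub_zero]
  have key : (∫ t in (-1:ℝ)..1, (1 - (t:ℂ)) * g t) = -(2 * f (-1)) := by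
    rw [hibp]
    have : (∫ x in (-1:ℝ)..1, (-1 : ℂ) * f x) = 0 := by
      rw [intervalIntegral.integral_const_mul, hfint, mul_zero]
    rw [this]
    push_cast
    ring
  have hnormkey : 2 * ‖f (-1)‖ = ‖∫ t in (-1:ℝ)..1, (1 - (t:ℂ)) * g t‖ := by
    rw [key]; simp
  -- the λ-parametrized bound
  have main : ∀ lam : ℝ, 0 < lam →
      2 * ‖f (-1)‖ ≤ 2/(lam*(C-B)) + (lam/2) * I := by
    intro lam hlam
    have hd : 0 < lam * (C-B) := by positivity
    have step1 : ‖∫ t in (-1:ℝ)..1, (1 - (t:ℂ)) * g t‖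
        ≤ ∫ t in (-1:ℝ)..1, ‖(1 - (t:ℂ)) * g t‖ :=
      intervalIntegral.norm_integral_le_integral_norm (by norm_num)
    have hRHSc : Continuous (fun t : ℝ => (1-t)/(lam*(C-B)) + (lam/2) * ((B*t+C) * ‖g t‖^2)) :=
      ((continuous_const.sub continuous_id).div_const _).add
        (continuous_const.mul (((continuous_const.mul continuous_id).add continuous_const).mul
          (hgc.norm.pow 2)))
    have step2 : (∫ t in (-1:ℝ)..1, ‖(1 - (t:ℂ)) * g t‖)
        ≤ ∫ t in (-1:ℝ)..1, ((1-t)/(lam*(C-B)) + (lam/2) * ((B*t+C) * ‖g t‖^2)) := by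
      apply intervalIntegral.integral_mono_on (by norm_num)
      · exact ((Continuous.sub continuous_const Complex.continuous_ofReal).mul hgc).norm.intervalIntegrable _ _
      · exact hRHSc.intervalIntegrable _ _
      · intro t ht
        obtain ⟨ht1, ht2⟩ := ht
        have hs : (0:ℝ) ≤ 1 - t := by linarith
        have ha : (0:ℝ) ≤ ‖g t‖ := norm_nonneg _
        have hF2 : (C-B) * (1-t) ≤ 2 * (B*t+C) := by nlinarith [mul_nonneg hBp (by linarith : (0:ℝ) ≤ 1 + t)]
        have hnm : ‖(1 - (t:ℂ)) * g t‖ = (1-t) * ‖g t‖ := by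
          rw [norm_mul]
          congr 1
          rw [show (1 - (t:ℂ)) = (((1-t:ℝ)):ℂ) by push_cast; ring, Complex.norm_real,
            Real.norm_eq_abs, abs_of_nonneg hs]
        rw [hnm]
        have hkey : (1-t) * ‖g t‖ - lam/2 * ((B*t+C) * ‖g t‖^2) ≤ (1-t)/(lam*(C-B)) := by
          rw [le_div_iff₀ hd]
          nlinarith [mul_nonneg hs (sq_nonneg (lam*(C-B)*‖g t‖ - 2)),
            mul_nonneg (mul_nonneg (sq_nonneg (lam*‖g t‖)) (by linarith : (0:ℝ) ≤ 2*(B*t+C) - (C-B)*(1-t))) hCB.le]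
        linarith
    have step3 : (∫ t in (-1:ℝ)..1, ((1-t)/(lam*(C-B)) + (lam/2) * ((B*t+C) * ‖g t‖^2)))
        = 2/(lam*(C-B)) + (lam/2) * I := by
      rw [intervalIntegral.integral_add, intervalIntegral.integral_const_mul]
      · congr 1
        rw [intervalIntegral.integral_div]
        congr 1
        rw [intervalIntegral.integral_sub intervalIntegrable_const (intervalIntegrable_id)]
        simp
        norm_num
      · exact (((continuous_const.sub continuous_id).div_const _)).intervalIntegrable _ _
      · exact (continuous_const.mul (((continuous_const.mul continuous_id).add continuous_const).mul (hgc.norm.pow 2))).intervalIntegrable _ _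
    calc 2 * ‖f (-1)‖ = ‖∫ t in (-1:ℝ)..1, (1 - (t:ℂ)) * g t‖ := hnormkey
      _ ≤ _ := step1
      _ ≤ _ := step2
      _ = _ := step3
  -- conclude
  set X := ‖f (-1)‖ with hXdef
  have hXnn : 0 ≤ X := norm_nonneg _
  rcases eq_or_lt_of_le hXnn with hX0 | hXp
  · rw [← hX0]
    simpa using mul_nonneg (by positivity : (0:ℝ) ≤ 1/(C-B)) hInn
  · have hlam : 0 < 2/((C-B)*X) := by positivity
    have h := main _ hlam
    have e1 : 2/((2/((C-B)*X))*(C-B)) = X := by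
      field_simp
    rw [e1] at h
    have h2 : X ≤ (1/((C-B)*X)) * I := by
      have : (2/((C-B)*X))/2 = 1/((C-B)*X) := by ring
      rw [this] at h
      linarith
    have h3 : X * X ≤ (1/((C-B)*X)) * I * X :=
      mul_le_mul_of_nonneg_right h2 hXnn
    have e2 : (1/((C-B)*X)) * I * X = 1/(C-B) * I := by
      field_simp
    rw [e2] at h3
    nlinarith [h3]
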